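/- Let P = (E, ρ) be a (q,m)-polymatroid of rank K = ρ(E), and for 0 ≤ x ≤ n define h(x) = max{ν(X) : X ∈ Σ(E), dim X = x} and h*(x) = max{ν*(X) : X ∈ Σ(E), dim X = x}. Fix a positive integer x ≤ n. Then h*(x−1) ≤ h*(x), and for 1 ≤ r ≤ K one has x = d_r(P) if and only if h*(x−1) < r ≤ h*(x). Also h(x−1) ≤ h(x), and for 1 ≤ s ≤ mn − K one has x = d_s(P*) if and only if h(x−1) < s ≤ h(x). -/

import Mathlib

set_option linter.unusedSectionVars false

open Module Matrix

variable {F : Type*} [Field F] [Fintype F] {n : ℕ}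

/-- The orthogonal complement of a subspace of `𝔽_q^n` with respect to the standard dot product. -/
def perp (X : Submodule F (Fin n → F)) : Submodule F (Fin n → F) where
  carrier := {x | ∀ y ∈ X, dotProduct x y = 0}
  add_mem' := fun {a b} ha hb y hy => by
    rw [Set.mem_setOf_eq] at *
    rw [add_dotProduct, ha y hy, hb y hy, add_zero]
  zero_mem' := fun y hy => zero_dotProduct y
  smul_mem' := fun c a ha y hy => by
    rw [Set.mem_setOf_eq] at *
    rw [smul_dotProduct, ha y hy, smul_zero]

/-- The dual rank function `ρ*(X) = ρ(X^⊥) + m·dim X − ρ(E)`. -/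
noncomputable def dualRho (m : ℕ) (rho : Submodule F (Fin n → F) → ℤ) (X : Submodule F (Fin n → F)) : ℤ :=
  rho (perp X) + (m : ℤ) * (finrank F X : ℤ) - rho ⊤

/-- The nullity function `ν(X) = m·dim X − ρ(X)`. -/
noncomputable def nullity (m : ℕ) (rho : Submodule F (Fin n → F) → ℤ) (X : Submodule F (Fin n → F)) : ℤ :=
  (m : ℤ) * (finrank F X : ℤ) - rho X

/-- The conullity function `ν*(X) = ρ(E) − ρ(X^⊥)`. -/
def coNull (rho : Submodule F (Fin n → F) → ℤ) (X : Submodule F (Fin n → F)) : ℤ :=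
  rho ⊤ - rho (perp X)

/-- The `r`-th generalized weight `d_r = min{dim X : ν*(X) ≥ r}`. -/
noncomputable def genW (rho : Submodule F (Fin n → F) → ℤ) (r : ℤ) : ℕ :=
  sInf {d : ℕ | ∃ X : Submodule F (Fin n → F), finrank F X = d ∧ r ≤ coNull rho X}

/-- `h(x) = max{ν(X) : dim X = x}`. -/
noncomputable def hFun (m : ℕ) (rho : Submodule F (Fin n → F) → ℤ) (x : ℕ) : ℤ :=
  sSup {v : ℤ | ∃ X : Submodule F (Fin n → F), finrank F X = x ∧ v = nullity m rho X}

/-- `h*(x) = max{ν*(X) : dim X = x}`. -/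
noncomputable def hStar (rho : Submodule F (Fin n → F) → ℤ) (x : ℕ) : ℤ :=
  sSup {v : ℤ | ∃ X : Submodule F (Fin n → F), finrank F X = x ∧ v = coNull rho X}

/-- A `(q,m)`-polymatroid on `E = 𝔽_q^n`. -/
structure QMPolymatroid (F : Type*) [Field F] [Fintype F] (n m : ℕ) where
  rho : Submodule F (Fin n → F) → ℤ
  rho_nonneg : ∀ X, 0 ≤ rho X
  rho_le : ∀ X, rho X ≤ (m : ℤ) * (finrank F X : ℤ)
  rho_mono : ∀ ⦃X Y⦄, X ≤ Y → rho X ≤ rho Y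
  rho_submodular : ∀ X Y, rho (X ⊔ Y) + rho (X ⊓ Y) ≤ rho X + rho Y

/-- A `(q,m)`-demi-polymatroid on `E = 𝔽_q^n`. -/
structure QMDemiPolymatroid (F : Type*) [Field F] [Fintype F] (n m : ℕ) where
  rho : Submodule F (Fin n → F) → ℤ
  rho_nonneg : ∀ X, 0 ≤ rho X
  rho_le : ∀ X, rho X ≤ (m : ℤ) * (finrank F X : ℤ)
  rho_mono : ∀ ⦃X Y⦄, X ≤ Y → rho X ≤ rho Y
  dual_nonneg : ∀ X, 0 ≤ dualRho m rho X
  dual_le : ∀ X, dualRho m rho X ≤ (m : ℤ) * (finrank F X : ℤ)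
  dual_mono : ∀ ⦃X Y⦄, X ≤ Y → dualRho m rho X ≤ dualRho m rho Y

section Codes

variable {m : ℕ}

/-- The row space of a matrix. -/
def rowSpace (A : Matrix (Fin m) (Fin n) F) : Submodule F (Fin n → F) :=
  Submodule.span F (Set.range A)

theorem rowSpace_le_iff (A : Matrix (Fin m) (Fin n) F) (X : Submodule F (Fin n → F)) :
    rowSpace A ≤ X ↔ ∀ i, A i ∈ X := by
  rw [rowSpace, Submodule.span_le]; exact Set.range_subset_iff

/-- Matrices whose row space is contained in `X`. -/
def supportedOn (m : ℕ) (X : Submodule F (Fin n → F)) :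
    Submodule F (Matrix (Fin m) (Fin n) F) where
  carrier := {A | rowSpace A ≤ X}
  add_mem' := fun {A B} hA hB => by
    rw [Set.mem_setOf_eq, rowSpace_le_iff] at *
    exact fun i => X.add_mem (hA i) (hB i)
  zero_mem' := by
    rw [Set.mem_setOf_eq, rowSpace_le_iff]
    exact fun i => X.zero_mem
  smul_mem' := fun c A hA => by
    rw [Set.mem_setOf_eq, rowSpace_le_iff] at *
    exact fun i => X.smul_mem c (hA i)

/-- `C(X)`: the subspace of a Delsarte code `C` of matrices whose row space lies in `X`. -/
def subcode (C : Submodule F (Matrix (Fin m) (Fin n) F)) (X : Submodule F (Fin n → F)) :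
    Submodule F (Matrix (Fin m) (Fin n) F) :=
  C ⊓ supportedOn m X

/-- The rank function `ρ_C(X) = dim C − dim C(X^⊥)` of a Delsarte code. -/
noncomputable def rhoC (C : Submodule F (Matrix (Fin m) (Fin n) F))
    (X : Submodule F (Fin n → F)) : ℤ :=
  (finrank F C : ℤ) - (finrank F (subcode C (perp X)) : ℤ)

/-- The generalized weight `d_r(C) = min{dim X : dim C(X) ≥ r}` of a Delsarte code. -/
noncomputable def codeWeight (C : Submodule F (Matrix (Fin m) (Fin n) F)) (r : ℤ) : ℕ :=
  sInf {d : ℕ | ∃ X : Submodule F (Fin n → F),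
    finrank F X = d ∧ r ≤ (finrank F (subcode C X) : ℤ)}

/-- The trace dual of a Delsarte code. -/
def traceDual (C : Submodule F (Matrix (Fin m) (Fin n) F)) :
    Submodule F (Matrix (Fin m) (Fin n) F) where
  carrier := {N | ∀ M ∈ C, Matrix.trace (M * Nᵀ) = 0}
  add_mem' := fun {N₁ N₂} h1 h2 M hM => by
    rw [Matrix.transpose_add, Matrix.mul_add, Matrix.trace_add, h1 M hM, h2 M hM, add_zero]
  zero_mem' := fun M hM => by simp
  smul_mem' := fun c N hN M hM => by
    rw [Matrix.transpose_smul, Matrix.mul_smul, Matrix.trace_smul, hN M hM, smul_zero]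

/-- The transposed code `Cᵀ = {Mᵗ : M ∈ C}` of a code of square matrices. -/
def transposeCode (C : Submodule F (Matrix (Fin n) (Fin n) F)) :
    Submodule F (Matrix (Fin n) (Fin n) F) where
  carrier := {A | Aᵀ ∈ C}
  add_mem' := fun {A B} hA hB => by
    rw [Set.mem_setOf_eq, Matrix.transpose_add]; exact C.add_mem hA hB
  zero_mem' := by
    rw [Set.mem_setOf_eq, Matrix.transpose_zero]; exact C.zero_mem
  smul_mem' := fun c A hA => by
    rw [Set.mem_setOf_eq, Matrix.transpose_smul]; exact C.smul_mem c hA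

/-- The maximum rank of a matrix in a subspace of matrices. -/
noncomputable def maxrank (A : Submodule F (Matrix (Fin m) (Fin n) F)) : ℕ :=
  sSup {r : ℕ | ∃ M ∈ A, M.rank = r}

/-- An optimal anticode: a subspace `𝒜` of `𝕄` with `dim 𝒜 = m · maxrank 𝒜`. -/
def IsOptimalAnticode (A : Submodule F (Matrix (Fin m) (Fin n) F)) : Prop :=
  finrank F A = m * maxrank A

/-- Ravagnani's generalized weight `a_r(C)`. -/
noncomputable def aWeight (C : Submodule F (Matrix (Fin m) (Fin n) F)) (r : ℤ) : ℕ :=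
  (sInf {d : ℕ | ∃ A : Submodule F (Matrix (Fin m) (Fin n) F),
    IsOptimalAnticode A ∧ finrank F A = d ∧ r ≤ (finrank F (A ⊓ C : Submodule F _) : ℤ)}) / m

end Codes

section AuxProof

variable {F : Type*} [Field F] [Fintype F] {n m : ℕ}

open Module

/-- The dot product as a bilinear form. -/
noncomputable def dotB (F : Type*) [Field F] (n : ℕ) : LinearMap.BilinForm F (Fin n → F) :=
  LinearMap.mk₂ F dotProduct
    (fun a b c => add_dotProduct a b c)
    (fun r a b => smul_dotProduct r a b)
    (fun a b c => dotProduct_add a b c)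
    (fun r a b => dotProduct_smul r a b)

@[simp] lemma dotB_apply (x y : Fin n → F) : dotB F n x y = dotProduct x y := rfl

lemma dotB_refl : (dotB F n).IsRefl := by
  intro x y h
  rw [dotB_apply, dotProduct_comm] at h
  exact h

lemma dotB_nondeg : (dotB F n).Nondegenerate := by
  refine ⟨fun x h => ?_, fun x h => ?_⟩
  · funext i
    have := h (Pi.single i 1)
    rw [dotB_apply, dotProduct_single_one] at this
    exact this
  · funext i
    have := h (Pi.single i 1)
    rw [dotB_apply, single_one_dotProduct] at this
    exact this

lemma perp_eq_orthogonal (X : Submodule F (Fin n → F)) :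
    perp X = (dotB F n).orthogonal X := by
  ext x
  constructor
  · intro hx y hy
    have := hx y hy
    show dotB F n y x = 0
    rw [dotB_apply, dotProduct_comm]
    exact this
  · intro hx y hy
    have := hx y hy
    change dotB F n y x = 0 at this
    rw [dotB_apply, dotProduct_comm] at this
    exact this

lemma finrank_fun_eq : finrank F (Fin n → F) = n := by
  rw [Module.finrank_pi]; simp

lemma finrank_perp (X : Submodule F (Fin n → F)) :
    finrank F (perp X) = n - finrank F X := by
  rw [perp_eq_orthogonal, LinearMap.BilinForm.finrank_orthogonal dotB_nondeg,
    finrank_fun_eq]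

lemma perp_perp (X : Submodule F (Fin n → F)) : perp (perp X) = X := by
  rw [perp_eq_orthogonal, perp_eq_orthogonal,
    LinearMap.BilinForm.orthogonal_orthogonal dotB_nondeg dotB_refl]

lemma perp_top : perp (⊤ : Submodule F (Fin n → F)) = ⊥ := by
  have h := finrank_perp (⊤ : Submodule F (Fin n → F))
  rw [finrank_top, finrank_fun_eq, Nat.sub_self] at h
  exact Submodule.finrank_eq_zero.mp h

lemma perp_anti {X Y : Submodule F (Fin n → F)} (h : X ≤ Y) : perp Y ≤ perp X :=
  fun x hx y hy => hx y (h hy)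

lemma finrank_le_n (X : Submodule F (Fin n → F)) : finrank F X ≤ n := by
  have := Submodule.finrank_le X
  rwa [finrank_fun_eq] at this

lemma sup_span_finrank {X : Submodule F (Fin n → F)} {v : Fin n → F} (hv : v ∉ X) :
    finrank F (X ⊔ (F ∙ v) : Submodule F (Fin n → F)) = finrank F X + 1 := by
  have hv0 : v ≠ 0 := fun h => hv (h ▸ X.zero_mem)
  have hinf : X ⊓ (F ∙ v) = ⊥ := by
    rw [eq_bot_iff]
    rintro w ⟨hw1, hw2⟩
    obtain ⟨c, rfl⟩ := Submodule.mem_span_singleton.mp hw2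
    rcases eq_or_ne c 0 with rfl | hc
    · simp
    · exact absurd (by simpa [smul_smul, inv_mul_cancel₀ hc] using X.smul_mem c⁻¹ hw1) hv
  have h := Submodule.finrank_sup_add_finrank_inf_eq X (F ∙ v)
  rw [hinf, finrank_bot, finrank_span_singleton hv0] at h
  omega

/-- Any subspace of dimension `< n` can be extended to one of any larger dimension `≤ n`. -/
lemma exists_extension : ∀ (k : ℕ) (X : Submodule F (Fin n → F)), finrank F X + k ≤ n →
    ∃ Y : Submodule F (Fin n → F), X ≤ Y ∧ finrank F Y = finrank F X + k := by
  intro k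
  induction k with
  | zero => exact fun X _ => ⟨X, le_rfl, by omega⟩
  | succ k ih =>
    intro X hX
    have hne : X ≠ ⊤ := by
      intro h
      rw [h, finrank_top, finrank_fun_eq] at hX
      omega
    obtain ⟨v, -, hvX⟩ := SetLike.exists_of_lt hne.lt_top
    obtain ⟨Y, hXY, hY⟩ := ih (X ⊔ (F ∙ v)) (by rw [sup_span_finrank hvX]; omega)
    exact ⟨Y, le_trans le_sup_left hXY, by rw [hY, sup_span_finrank hvX]; omega⟩

lemma rho_bot (P : QMPolymatroid F n m) : P.rho ⊥ = 0 :=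
  le_antisymm (by simpa using P.rho_le ⊥) (P.rho_nonneg ⊥)

lemma rho_sup_span (P : QMPolymatroid F n m) (X : Submodule F (Fin n → F)) (v : Fin n → F) :
    P.rho (X ⊔ (F ∙ v)) ≤ P.rho X + m := by
  have h1 := P.rho_submodular X (F ∙ v)
  have h2 := P.rho_nonneg (X ⊓ (F ∙ v))
  have h3 := P.rho_le (F ∙ v)
  have h4 : finrank F (F ∙ v : Submodule F (Fin n → F)) ≤ 1 := by
    rcases eq_or_ne v 0 with rfl | hv
    · rw [Submodule.span_zero_singleton]
      simp
    · rw [finrank_span_singleton hv]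
  have h5 : (m : ℤ) * (finrank F (F ∙ v : Submodule F (Fin n → F)) : ℤ) ≤ (m : ℤ) * 1 :=
    mul_le_mul_of_nonneg_left (by exact_mod_cast h4) (by positivity)
  linarith

lemma nullity_mono_aux (P : QMPolymatroid F n m) :
    ∀ (k : ℕ) (X Y : Submodule F (Fin n → F)), X ≤ Y → finrank F Y ≤ finrank F X + k →
      nullity m P.rho X ≤ nullity m P.rho Y := by
  intro k
  induction k with
  | zero =>
    intro X Y hXY hfr
    have : X = Y := Submodule.eq_of_le_of_finrank_le hXY hfr
    rw [this]
  | succ k ih =>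
    intro X Y hXY hfr
    by_cases hk : finrank F Y ≤ finrank F X + k
    · exact ih X Y hXY hk
    have hlt : X < Y := lt_of_le_of_ne hXY (by rintro rfl; omega)
    obtain ⟨v, hvY, hvX⟩ := SetLike.exists_of_lt hlt
    have hX'Y : X ⊔ (F ∙ v) ≤ Y :=
      sup_le hXY ((Submodule.span_singleton_le_iff_mem _ _).mpr hvY)
    have hfr' : finrank F (X ⊔ (F ∙ v) : Submodule F (Fin n → F)) = finrank F X + 1 :=
      sup_span_finrank hvX
    have h1 : nullity m P.rho X ≤ nullity m P.rho (X ⊔ (F ∙ v)) := by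
      have := rho_sup_span P X v
      unfold nullity
      rw [hfr']
      push_cast
      linarith
    exact h1.trans (ih _ Y hX'Y (by omega))

lemma nullity_mono (P : QMPolymatroid F n m) {X Y : Submodule F (Fin n → F)} (h : X ≤ Y) :
    nullity m P.rho X ≤ nullity m P.rho Y :=
  nullity_mono_aux P (finrank F Y) X Y h (by omega)

lemma coNull_mono (P : QMPolymatroid F n m) {X Y : Submodule F (Fin n → F)} (h : X ≤ Y) :
    coNull P.rho X ≤ coNull P.rho Y := by
  unfold coNull
  have := P.rho_mono (perp_anti h)
  linarith

lemma coNull_dualRho (P : QMPolymatroid F n m) (X : Submodule F (Fin n → F)) :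
    coNull (dualRho m P.rho) X = nullity m P.rho X := by
  unfold coNull dualRho nullity
  rw [perp_top, perp_perp, finrank_perp, rho_bot P, finrank_top, finrank_fun_eq,
    Nat.cast_sub (finrank_le_n X)]
  ring

/-- The abstract characterization lemma. -/
lemma main_abstract (f : Submodule F (Fin n → F) → ℤ) (C : ℤ)
    (hmono : ∀ ⦃X Y : Submodule F (Fin n → F)⦄, X ≤ Y → f X ≤ f Y)
    (hbdd : ∀ X, f X ≤ C)
    (x : ℕ) (hx1 : 1 ≤ x) (hxn : x ≤ n) :
    (sSup {v : ℤ | ∃ X : Submodule F (Fin n → F), finrank F X = x - 1 ∧ v = f X} ≤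
      sSup {v : ℤ | ∃ X : Submodule F (Fin n → F), finrank F X = x ∧ v = f X}) ∧
    ∀ r : ℤ, 1 ≤ r → r ≤ f ⊤ →
      ((x = sInf {d : ℕ | ∃ X : Submodule F (Fin n → F), finrank F X = d ∧ r ≤ f X}) ↔
        (sSup {v : ℤ | ∃ X : Submodule F (Fin n → F), finrank F X = x - 1 ∧ v = f X} < r ∧
         r ≤ sSup {v : ℤ | ∃ X : Submodule F (Fin n → F), finrank F X = x ∧ v = f X})) := by
  set S : ℕ → Set ℤ :=
    fun y => {v : ℤ | ∃ X : Submodule F (Fin n → F), finrank F X = y ∧ v = f X} with hS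
  -- nonemptiness and boundedness of the value sets
  have hne : ∀ y : ℕ, y ≤ n → (S y).Nonempty := by
    intro y hy
    obtain ⟨Y, -, hY⟩ := exists_extension y (⊥ : Submodule F (Fin n → F)) (by simpa using hy)
    exact ⟨f Y, Y, by simpa using hY, rfl⟩
  have hbddS : ∀ y : ℕ, BddAbove (S y) := by
    rintro y
    exact ⟨C, by rintro v ⟨X, -, rfl⟩; exact hbdd X⟩
  -- characterization of `r ≤ sSup (S y)`
  have hchar : ∀ (y : ℕ) (r : ℤ), y ≤ n →
      (r ≤ sSup (S y) ↔ ∃ X : Submodule F (Fin n → F), finrank F X = y ∧ r ≤ f X) := by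
    intro y r hy
    constructor
    · intro h
      obtain ⟨X, hX, hv⟩ := Int.csSup_mem (hne y hy) (hbddS y)
      exact ⟨X, hX, hv ▸ h⟩
    · rintro ⟨X, hX, hr⟩
      exact hr.trans (le_csSup (hbddS y) ⟨X, hX, rfl⟩)
  -- monotonicity
  have hmonoS : sSup (S (x - 1)) ≤ sSup (S x) := by
    apply csSup_le (hne (x - 1) (by omega))
    rintro v ⟨X, hX, rfl⟩
    obtain ⟨Y, hXY, hY⟩ := exists_extension 1 X (by omega)
    exact (hmono hXY).trans (le_csSup (hbddS x) ⟨Y, by omega, rfl⟩)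
  refine ⟨hmonoS, fun r hr1 hrtop => ?_⟩
  set D : Set ℕ := {d : ℕ | ∃ X : Submodule F (Fin n → F), finrank F X = d ∧ r ≤ f X} with hD
  have hDne : D.Nonempty := ⟨n, ⊤, by rw [finrank_top, finrank_fun_eq], hrtop⟩
  -- sInf D ≤ y ↔ r ≤ sSup (S y)
  have hE : ∀ y : ℕ, y ≤ n → (sInf D ≤ y ↔ r ≤ sSup (S y)) := by
    intro y hy
    rw [hchar y r hy]
    constructor
    · intro h
      obtain ⟨X, hX, hrX⟩ := Nat.sInf_mem hDne
      obtain ⟨Y, hXY, hY⟩ := exists_extension (y - finrank F X) X (by omega)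
      exact ⟨Y, by omega, hrX.trans (hmono hXY)⟩
    · rintro ⟨X, hX, hrX⟩
      exact Nat.sInf_le ⟨X, hX, hrX⟩
  have h1 := hE x hxn
  have h2 := hE (x - 1) (by omega)
  constructor
  · intro h
    refine ⟨?_, h1.mp (by omega)⟩
    by_contra hc
    push_neg at hc
    have := h2.mpr hc
    omega
  · rintro ⟨hlow, hhigh⟩
    have hle := h1.mpr hhigh
    have hgt : ¬ sInf D ≤ x - 1 := fun hc => absurd (h2.mp hc) (not_le.mpr hlow)
    omega

end AuxProof

/-- characterization of the generalized weights of `P` and of its dual `P*`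
in terms of the functions `h` and `h*`. -/
theorem genW_iff_hStar {F : Type*} [Field F] [Fintype F] {n m : ℕ}
    (P : QMPolymatroid F n m) (x : ℕ) (hx1 : 1 ≤ x) (hxn : x ≤ n) :
    (hStar P.rho (x - 1) ≤ hStar P.rho x ∧
      ∀ r : ℤ, 1 ≤ r → r ≤ P.rho ⊤ →
        ((x = genW P.rho r) ↔ (hStar P.rho (x - 1) < r ∧ r ≤ hStar P.rho x))) ∧
    (hFun m P.rho (x - 1) ≤ hFun m P.rho x ∧
      ∀ s : ℤ, 1 ≤ s → s ≤ (m : ℤ) * (n : ℤ) - P.rho ⊤ →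
        ((x = genW (dualRho m P.rho) s) ↔ (hFun m P.rho (x - 1) < s ∧ s ≤ hFun m P.rho x))) := by
  have hcoTop : coNull P.rho (⊤ : Submodule F (Fin n → F)) = P.rho ⊤ := by
    unfold coNull
    rw [perp_top, rho_bot P]
    ring
  have hnulTop : nullity m P.rho (⊤ : Submodule F (Fin n → F)) = (m : ℤ) * (n : ℤ) - P.rho ⊤ := by
    unfold nullity
    rw [finrank_top, finrank_fun_eq]
  constructor
  · have habs := main_abstract (coNull P.rho) (P.rho ⊤)
      (fun X Y h => coNull_mono P h)
      (fun X => by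
        unfold coNull
        have := P.rho_nonneg (perp X)
        linarith)
      x hx1 hxn
    exact ⟨habs.1, fun r hr1 hr2 => habs.2 r hr1 (by rw [hcoTop]; exact hr2)⟩
  · have hfun : coNull (dualRho m P.rho) = nullity m P.rho := funext (coNull_dualRho P)
    have habs := main_abstract (nullity m P.rho) ((m : ℤ) * (n : ℤ))
      (fun X Y h => nullity_mono P h)
      (fun X => by
        unfold nullity
        have h1 := P.rho_nonneg X
        have h2 : (finrank F X : ℤ) ≤ (n : ℤ) := by exact_mod_cast finrank_le_n X
        have h3 : (m : ℤ) * (finrank F X : ℤ) ≤ (m : ℤ) * (n : ℤ) :=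
          mul_le_mul_of_nonneg_left h2 (by positivity)
        linarith)
      x hx1 hxn
    refine ⟨habs.1, fun s hs1 hs2 => ?_⟩
    have hgw : genW (dualRho m P.rho) s =
        sInf {d : ℕ | ∃ X : Submodule F (Fin n → F), finrank F X = d ∧ s ≤ nullity m P.rho X} := by
      unfold genW
      rw [hfun]
    rw [hgw]
    exact habs.2 s hs1 (by rw [hnulTop]; exact hs2)
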